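/- Let G = (S ∪ K, E) be a split graph where S is an independent set, K is a clique, |S| = |K|, and the edges between S and K form a perfect matching (each vertex of S is adjacent to exactly one vertex of K and each vertex of K is adjacent to exactly one vertex of S). Then Tr_t(G) = 1. -/
import Mathlib


/-- A total transitive partition of `G` into `k` parts: the parts are nonempty, they
partition the vertex set, and `V_i` dominates `V_j` for all `i ≤ j`. -/
def TTPartition {V : Type*} (G : SimpleGraph V) (k : ℕ) (P : Fin k → Set V) : Prop :=
  (∀ i, (P i).Nonempty) ∧
  (∀ v : V, ∃! i, v ∈ P i) ∧
  (∀ i j : Fin k, i ≤ j → ∀ v ∈ P j, ∃ u ∈ P i, G.Adj u v)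

/-- Let `G` be a split graph whose vertices are partitioned into an independent set `S`
and a clique `K` with `|S| = |K|`, where the edges between `S` and `K` form a perfect
matching. Then the total transitivity of `G` is `1`. -/
theorem stmt9 {V : Type*} [Fintype V] [Nonempty V] (G : SimpleGraph V)
    (S K : Set V) (hdisj : Disjoint S K) (hcover : S ∪ K = Set.univ)
    (hS : ∀ u ∈ S, ∀ v ∈ S, ¬ G.Adj u v)
    (hK : G.IsClique K)
    (hcard : S.ncard = K.ncard)
    (hmatchS : ∀ s ∈ S, ∃! t : V, t ∈ K ∧ G.Adj s t)
    (hmatchK : ∀ t ∈ K, ∃! s : V, s ∈ S ∧ G.Adj t s)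
    (hiso : ∀ v : V, ∃ u : V, G.Adj v u) :
    IsGreatest {k : ℕ | ∃ P : Fin k → Set V, TTPartition G k P} 1 := by
  have hSK : ∀ u : V, u ∈ S ∨ u ∈ K := by
    intro u
    have h := Set.mem_univ u
    rw [← hcover] at h
    exact h
  constructor
  · refine ⟨fun _ => Set.univ, fun i => ⟨Classical.arbitrary V, trivial⟩,
      fun v => ⟨0, trivial, fun i _ => Subsingleton.elim i 0⟩, ?_⟩
    intro i j _ v _
    obtain ⟨u, hu⟩ := hiso v
    exact ⟨u, trivial, hu.symm⟩
  · rintro k ⟨P, hne, huniq, hdom⟩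
    by_contra h
    push_neg at h
    have h2 : 2 ≤ k := h
    set i0 : Fin k := ⟨0, by omega⟩ with hi0
    set i1 : Fin k := ⟨1, by omega⟩ with hi1
    have h01 : i0 ≠ i1 := by simp [hi0, hi1, Fin.ext_iff]
    -- the unique neighbor of a vertex of S
    have key : ∀ s ∈ S, ∀ t, (t ∈ K ∧ G.Adj s t) → ∀ u, G.Adj u s → u = t := by
      intro s hs t ht u hu
      obtain ⟨t', ht', htuniq⟩ := hmatchS s hs
      have huK : u ∈ K := by
        rcases hSK u with huS | huK
        · exact absurd hu (hS u huS s hs)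
        · exact huK
      rw [htuniq u ⟨huK, hu.symm⟩, htuniq t ht]
    have hSP0 : ∀ s ∈ S, s ∈ P i0 := by
      intro s hs
      obtain ⟨j, hj, _⟩ := huniq s
      by_cases hji : j = i0
      · rwa [hji] at hj
      obtain ⟨t, htm, _⟩ := hmatchS s hs
      obtain ⟨u0, hu0P, hu0⟩ := hdom i0 j (by simp [hi0, Fin.le_def]) s hj
      obtain ⟨uj, hujP, huj⟩ := hdom j j le_rfl s hj
      have e0 := key s hs t htm u0 hu0
      have ej := key s hs t htm uj huj
      obtain ⟨i, _, hiu⟩ := huniq t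
      exact absurd ((hiu j (ej ▸ hujP)).trans (hiu i0 (e0 ▸ hu0P)).symm) hji
    have hKP0 : ∀ t ∈ K, t ∈ P i0 := by
      intro t ht
      obtain ⟨s, ⟨hsS, hts⟩, _⟩ := hmatchK t ht
      obtain ⟨u, huP, hu⟩ := hdom i0 i0 le_rfl s (hSP0 s hsS)
      have := key s hsS t ⟨ht, hts.symm⟩ u hu
      rwa [← this]
    obtain ⟨v, hv1⟩ := hne i1
    have hv0 : v ∈ P i0 := by
      rcases hSK v with hvS | hvK
      · exact hSP0 v hvS
      · exact hKP0 v hvK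
    obtain ⟨i, _, hiu⟩ := huniq v
    exact h01 ((hiu i0 hv0).trans (hiu i1 hv1).symm)
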